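/- Define a coloring c : ℕ → {0, 1} by writing each positive integer m as m = 3^k·q with 3 ∤ q, and setting c(m) = 0 if q ≡ 1 (mod 3) and c(m) = 1 if q ≡ 2 (mod 3). Then: (a) for all x, y, z ∈ ℕ, c(x) = c(y) implies c(x·z) = c(y·z); (b) there are no three consecutive positive integers n, n+1, n+2 all of the same color; consequently (c) there is no positive integer x divisible by some n ∈ ℕ such that x, x·(n+1)/n, x·(n+2)/n are all the same color. -/

import Mathlib

/-- The 3-Rado coloring: write `m = 3^k * q` with `3 ∤ q`; color `0` if `q ≡ 1 [MOD 3]`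
and `1` if `q ≡ 2 [MOD 3]`. -/
def radoColor (m : ℕ) : ℕ := if (m / 3 ^ (m.factorization 3)) % 3 = 1 then 0 else 1

private lemma oc_mod3 (m : ℕ) (hm : m ≠ 0) :
    (m / 3 ^ (m.factorization 3)) % 3 = 1 ∨ (m / 3 ^ (m.factorization 3)) % 3 = 2 := by
  have h : ¬ (3 ∣ m / 3 ^ (m.factorization 3)) :=
    Nat.not_dvd_ordCompl (by norm_num) hm
  omega

private lemma rc_mul_iff (a b c d : ℕ) (ha : a ≠ 0) (hb : b ≠ 0) (hc : c ≠ 0) (hd : d ≠ 0) :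
    (radoColor (a * b) = radoColor (c * d)) ↔
      (radoColor a = radoColor c ↔ radoColor b = radoColor d) := by
  have e1 : (a*b) / 3 ^ ((a*b).factorization 3)
      = (a / 3 ^ (a.factorization 3)) * (b / 3 ^ (b.factorization 3)) := Nat.ordCompl_mul a b 3
  have e2 : (c*d) / 3 ^ ((c*d).factorization 3)
      = (c / 3 ^ (c.factorization 3)) * (d / 3 ^ (d.factorization 3)) := Nat.ordCompl_mul c d 3
  unfold radoColor
  rw [e1, e2, Nat.mul_mod (a / 3 ^ (a.factorization 3)), Nat.mul_mod (c / 3 ^ (c.factorization 3))]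
  rcases oc_mod3 a ha with h1|h1 <;> rcases oc_mod3 b hb with h2|h2 <;>
    rcases oc_mod3 c hc with h3|h3 <;> rcases oc_mod3 d hd with h4|h4 <;>
      rw [h1, h2, h3, h4] <;> norm_num

private lemma rc_mod (m : ℕ) (h : ¬ 3 ∣ m) :
    radoColor m = if m % 3 = 1 then 0 else 1 := by
  unfold radoColor
  rw [Nat.factorization_eq_zero_of_not_dvd h, pow_zero, Nat.div_one]

private lemma rc_consec (n : ℕ) (hn : 0 < n) :
    ¬ (radoColor n = radoColor (n + 1) ∧ radoColor (n + 1) = radoColor (n + 2)) := by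
  rintro ⟨h1, h2⟩
  have h3 : n % 3 = 0 ∨ n % 3 = 1 ∨ n % 3 = 2 := by omega
  rcases h3 with h3 | h3 | h3
  · have e1 := rc_mod (n+1) (by omega)
    have e2 := rc_mod (n+2) (by omega)
    rw [e1, e2] at h2
    simp only [show (n+1) % 3 = 1 by omega, show (n+2) % 3 = 2 by omega] at h2
    norm_num at h2
  · have e1 := rc_mod n (by omega)
    have e2 := rc_mod (n+1) (by omega)
    rw [e1, e2] at h1
    simp only [show n % 3 = 1 from h3, show (n+1) % 3 = 2 by omega] at h1
    norm_num at h1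
  · have e1 := rc_mod n (by omega)
    have e2 := rc_mod (n+2) (by omega)
    have h4 : radoColor n = radoColor (n+2) := h1.trans h2
    rw [e1, e2] at h4
    simp only [show n % 3 = 2 from h3, show (n+2) % 3 = 1 by omega] at h4
    norm_num at h4

theorem stmt9 :
    (∀ x y z : ℕ, 0 < x → 0 < y → 0 < z →
        radoColor x = radoColor y → radoColor (x * z) = radoColor (y * z)) ∧
    (∀ n : ℕ, 0 < n →
        ¬ (radoColor n = radoColor (n + 1) ∧ radoColor (n + 1) = radoColor (n + 2))) ∧
    (∀ x n : ℕ, 0 < x → 0 < n → n ∣ x →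
        ¬ (radoColor x = radoColor (x * (n + 1) / n) ∧
            radoColor x = radoColor (x * (n + 2) / n))) := by
  refine ⟨?_, ?_, ?_⟩
  · intro x y z hx hy hz h
    rw [rc_mul_iff x z y z hx.ne' hz.ne' hy.ne' hz.ne']
    simp [h]
  · exact rc_consec
  · rintro x n hx hn ⟨k, rfl⟩ ⟨h1, h2⟩
    have hk : k ≠ 0 := by rintro rfl; simp at hx
    have d1 : (n * k) * (n + 1) / n = k * (n + 1) := by
      rw [mul_assoc, Nat.mul_div_cancel_left _ hn]
    have d2 : (n * k) * (n + 2) / n = k * (n + 2) := by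
      rw [mul_assoc, Nat.mul_div_cancel_left _ hn]
    rw [d1, show n * k = k * n from mul_comm n k] at h1
    rw [d2, show n * k = k * n from mul_comm n k] at h2
    have e1 : radoColor n = radoColor (n + 1) :=
      ((rc_mul_iff k n k (n+1) hk hn.ne' hk (by omega)).mp h1).mp rfl
    have e2 : radoColor n = radoColor (n + 2) :=
      ((rc_mul_iff k n k (n+2) hk hn.ne' hk (by omega)).mp h2).mp rfl
    exact rc_consec n hn ⟨e1, e1.symm.trans e2⟩
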